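/- Let X be a Hilbert space, a = h - μq with h, q commuting selfadjoint operators, q² = 1, h ≥ m > 0, |μ| < m, and κ a conjugation on X commuting with h. Then the set E = span_ℝ { e^{it(h-μq)} x : t ∈ ℝ, x ∈ X_κ } is dense in X, where X_κ = {x : κx = x}. -/

import Mathlib

open Complex
open scoped ComplexInnerProductSpace

private lemma oneSub_surj {X : Type*} [NormedAddCommGroup X] [NormedSpace ℝ X]
    [CompleteSpace X] (r : X →L[ℝ] X) (hr : ‖r‖ < 1) (x : X) : ∃ y, y - r y = x := by
  let u : (X →L[ℝ] X)ˣ := Units.oneSub r hr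
  refine ⟨(↑u⁻¹ : X →L[ℝ] X) x, ?_⟩
  have h1 : ((1 - r) : X →L[ℝ] X) ((↑u⁻¹ : X →L[ℝ] X) x) = x := by
    have h2 : ((↑u * ↑u⁻¹ : X →L[ℝ] X)) x = x := by
      rw [u.mul_inv]; simp
    simpa [u, Units.val_oneSub, ContinuousLinearMap.mul_apply] using h2
  simpa using h1

set_option maxHeartbeats 1000000 in
/-- For commuting selfadjoint `h, q` with `q² = 1`, `h ≥ m > 0`, `|μ| < m`,
and a conjugation `κ` commuting with `h`, the real span of
`{ e^{it(h-μq)} x : t ∈ ℝ, κ x = x }` is dense in `X`. -/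
theorem density_of_time_translates
    {X : Type*} [NormedAddCommGroup X] [InnerProductSpace ℂ X] [CompleteSpace X]
    (m μ : ℝ) (hm : 0 < m) (hμ : |μ| < m)
    (h q : X →L[ℂ] X)
    (hh : IsSelfAdjoint h) (hqsa : IsSelfAdjoint q)
    (hcomm : Commute h q) (hq2 : q * q = 1)
    (hbound : ∀ x : X, m * ‖x‖ ^ 2 ≤ (⟪x, h x⟫).re)
    -- the conjugation κ, commuting with h
    (κ : X → X)
    (hκadd : ∀ x y : X, κ (x + y) = κ x + κ y)
    (hκsmul : ∀ (c : ℂ) (x : X), κ (c • x) = (starRingEnd ℂ) c • κ x)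
    (hκinv : ∀ x : X, κ (κ x) = x)
    (hκinner : ∀ x y : X, ⟪κ x, κ y⟫ = (starRingEnd ℂ) ⟪x, y⟫)
    (hκh : ∀ x : X, κ (h x) = h (κ x)) :
    Dense (Submodule.span ℝ
      {y : X | ∃ (t : ℝ) (x : X), κ x = x ∧
        y = NormedSpace.exp ((Complex.I * t) • (h - μ • q)) x} : Set X) := by
  -- notation
  set a : X →L[ℂ] X := h - μ • q with ha
  have hrs : ∀ (t : ℝ) (u : X), (t : ℂ) • u = t • u := fun t u => by
    rw [← Complex.coe_algebraMap, algebraMap_smul]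
  -- basic norm facts
  have hqiso : ∀ v : X, ‖q v‖ = ‖v‖ := by
    intro v
    have h1 : ⟪q v, q v⟫ = ⟪v, v⟫ := by
      rw [← ContinuousLinearMap.adjoint_inner_right, hqsa.adjoint_eq]
      have h2 : q (q v) = (q * q) v := rfl
      rw [h2, hq2]; rfl
    rw [norm_eq_sqrt_re_inner (𝕜 := ℂ) (q v), norm_eq_sqrt_re_inner (𝕜 := ℂ) v, h1]
  have hlow : ∀ v : X, m * ‖v‖ ≤ ‖h v‖ := by
    intro v
    rcases eq_or_ne v 0 with rfl | hv
    · simp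
    have h1 : m * ‖v‖ ^ 2 ≤ ‖v‖ * ‖h v‖ := by
      calc m * ‖v‖ ^ 2 ≤ (⟪v, h v⟫).re := hbound v
        _ ≤ ‖⟪v, h v⟫‖ := Complex.re_le_norm _
        _ = ‖⟪v, h v⟫‖ := rfl
        _ ≤ ‖v‖ * ‖h v‖ := norm_inner_le_norm v (h v)
    have hv' : 0 < ‖v‖ := norm_pos_iff.mpr hv
    nlinarith [hv']
  have hκnorm : ∀ v : X, ‖κ v‖ = ‖v‖ := by
    intro v
    have h1 : ⟪κ v, κ v⟫ = ⟪v, v⟫ := by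
      rw [hκinner, inner_self_eq_norm_sq_to_K]
      simp [inner_self_eq_norm_sq_to_K]
    rw [norm_eq_sqrt_re_inner (𝕜 := ℂ) (κ v), norm_eq_sqrt_re_inner (𝕜 := ℂ) v, h1]
  have hκreal : ∀ (t : ℝ) (v : X), κ (t • v) = t • κ v := by
    intro t v
    rw [← hrs t v, hκsmul, Complex.conj_ofReal, hrs]
  have hκsub : ∀ v w : X, κ (v - w) = κ v - κ w := by
    intro v w
    have hneg : κ (-w) = -κ w := by
      have := hκsmul (-1) w
      simpa using this
    rw [sub_eq_add_neg, hκadd, hneg, sub_eq_add_neg]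
  -- h is invertible
  have hker : h.ker = ⊥ := by
    rw [Submodule.eq_bot_iff]
    intro v hv
    have hv0 : h v = 0 := hv
    have h0 := hlow v
    rw [hv0, norm_zero] at h0
    by_contra hne
    have hpos : 0 < ‖v‖ := norm_pos_iff.mpr hne
    nlinarith
  have hanti : AntilipschitzWith ⟨m⁻¹, by positivity⟩ h := by
    apply ContinuousLinearMap.antilipschitz_of_bound
    intro v
    have h0 := hlow v
    have : ‖v‖ ≤ m⁻¹ * ‖h v‖ := by
      calc ‖v‖ = m⁻¹ * (m * ‖v‖) := by field_simp
        _ ≤ m⁻¹ * ‖h v‖ := by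
            apply mul_le_mul_of_nonneg_left h0 (by positivity)
    exact this
  have hrange : h.range = ⊤ := by
    haveI hcompl : CompleteSpace h.range := hanti.completeSpace_range_clm
    rw [← Submodule.orthogonal_eq_bot_iff]
    rw [Submodule.eq_bot_iff]
    intro v hv
    have h1 : ⟪h v, v⟫ = 0 :=
      (Submodule.mem_orthogonal _ v).mp hv (h v) (LinearMap.mem_range_self _ v)
    have h2 : (⟪v, h v⟫).re = 0 := by
      rw [← inner_conj_symm, h1]; simp
    have h3 := hbound v
    rw [h2] at h3
    by_contra hne
    have hpos : 0 < ‖v‖ := norm_pos_iff.mpr hne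
    nlinarith [mul_pos hm (pow_pos hpos 2)]
  set hE : X ≃L[ℂ] X := ContinuousLinearEquiv.ofBijective h hker hrange with hEdef
  have hEapp : ∀ v : X, hE v = h v := fun v => rfl
  have hEsymm : ∀ v : X, h (hE.symm v) = v := fun v => by
    rw [← hEapp]; exact hE.apply_symm_apply v
  have hEbound : ∀ v : X, ‖hE.symm v‖ ≤ m⁻¹ * ‖v‖ := by
    intro v
    have h0 := hlow (hE.symm v)
    rw [hEsymm v] at h0
    calc ‖hE.symm v‖ = m⁻¹ * (m * ‖hE.symm v‖) := by field_simp
      _ ≤ m⁻¹ * ‖v‖ := by apply mul_le_mul_of_nonneg_left h0 (by positivity)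
  have hκhE : ∀ v : X, κ (hE.symm v) = hE.symm (κ v) := by
    intro v
    have hinj : Function.Injective h := by
      intro u₁ u₂ huv
      have : hE u₁ = hE u₂ := by rw [hEapp, hEapp, huv]
      exact hE.injective this
    apply hinj
    rw [← hκh, hEsymm, hEsymm]
  -- κ as a continuous ℝ-linear map
  set κL : X →L[ℝ] X := LinearMap.mkContinuous
    { toFun := κ, map_add' := hκadd, map_smul' := fun t v => hκreal t v }
    1 (fun v => by rw [one_mul]; exact le_of_eq (hκnorm v)) with hκLdef
  -- the contraction r
  set r : X →L[ℝ] X := (μ/2) • ((q.restrictScalars ℝ).comp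
    (((hE.symm : X →L[ℂ] X).restrictScalars ℝ).comp
      (ContinuousLinearMap.id ℝ X - κL))) with hrdef
  have hrapp : ∀ v : X, r v = (μ/2) • q (hE.symm (v - κ v)) := fun v => rfl
  have hrnorm : ‖r‖ < 1 := by
    have hb : ∀ v : X, ‖r v‖ ≤ (|μ| / m) * ‖v‖ := by
      intro v
      rw [hrapp, norm_smul]
      have h1 : ‖q (hE.symm (v - κ v))‖ ≤ m⁻¹ * ‖v - κ v‖ := by
        rw [hqiso]; exact hEbound _
      have h2 : ‖v - κ v‖ ≤ 2 * ‖v‖ := by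
        calc ‖v - κ v‖ ≤ ‖v‖ + ‖κ v‖ := norm_sub_le _ _
          _ = 2 * ‖v‖ := by rw [hκnorm]; ring
      have h3 : ‖(μ/2 : ℝ)‖ = |μ| / 2 := by
        rw [Real.norm_eq_abs, abs_div]; norm_num
      calc ‖(μ/2 : ℝ)‖ * ‖q (hE.symm (v - κ v))‖
          ≤ (|μ|/2) * (m⁻¹ * (2 * ‖v‖)) := by
            rw [h3]
            apply mul_le_mul_of_nonneg_left _ (by positivity)
            exact le_trans h1 (by
              apply mul_le_mul_of_nonneg_left h2 (by positivity))
        _ = (|μ| / m) * ‖v‖ := by field_simp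
    have hle := ContinuousLinearMap.opNorm_le_bound r (by positivity) hb
    calc ‖r‖ ≤ |μ| / m := hle
      _ < 1 := by rw [div_lt_one hm]; exact hμ
  -- the closed subspace M
  set M := (Submodule.span ℝ
      {y : X | ∃ (t : ℝ) (x : X), κ x = x ∧
        y = NormedSpace.exp ((Complex.I * t) • a) x}).topologicalClosure with hMdef
  have hMclosed : IsClosed (M : Set X) :=
    Submodule.isClosed_topologicalClosure _
  -- step 1: fixed points of κ are in M
  have mem0 : ∀ v : X, κ v = v → v ∈ M := by
    intro v hv
    apply Submodule.le_topologicalClosure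
    apply Submodule.subset_span
    refine ⟨0, v, hv, ?_⟩
    have h0 : ((Complex.I * ((0:ℝ):ℂ)) • a) = 0 := by push_cast; simp
    rw [h0, NormedSpace.exp_zero, ContinuousLinearMap.one_apply]
  -- step 2: I • a v ∈ M for κ-fixed v
  have mem1 : ∀ v : X, κ v = v → Complex.I • a v ∈ M := by
    intro v hv
    set B : X →L[ℂ] X := Complex.I • a with hB
    have hexp : ∀ t : ℝ, NormedSpace.exp (t • B) =
        NormedSpace.exp ((Complex.I * (t:ℂ)) • a) := by
      intro t
      congr 1
      calc (t : ℝ) • B = ((t:ℂ)) • B := by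
            rw [← Complex.coe_algebraMap, algebraMap_smul]
        _ = ((t:ℂ) * Complex.I) • a := by rw [hB, smul_smul]
        _ = (Complex.I * (t:ℂ)) • a := by rw [mul_comm]
    have hd : HasDerivAt (fun t : ℝ => NormedSpace.exp (t • B)) B 0 := by
      have := hasDerivAt_exp_smul_const (𝕂 := ℝ) B (0 : ℝ)
      simpa using this
    set ev : (X →L[ℂ] X) →L[ℝ] X :=
      ((ContinuousLinearMap.apply ℂ X v).restrictScalars ℝ) with hev
    have hd2 : HasDerivAt (fun t : ℝ => ev (NormedSpace.exp (t • B))) (ev B) 0 :=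
      ev.hasFDerivAt.comp_hasDerivAt 0 hd
    rw [hasDerivAt_iff_tendsto_slope] at hd2
    have hBv : ev B = Complex.I • a v := rfl
    rw [← hBv]
    refine hMclosed.mem_of_tendsto hd2 ?_
    filter_upwards with t
    have hslope : slope (fun t : ℝ => ev (NormedSpace.exp (t • B))) 0 t
        = (t - 0)⁻¹ • (ev (NormedSpace.exp (t • B)) - ev (NormedSpace.exp ((0:ℝ) • B))) := rfl
    rw [hslope]
    apply Submodule.smul_mem
    apply Submodule.sub_mem
    · have hevapp : ev (NormedSpace.exp (t • B)) = (NormedSpace.exp (t • B)) v := rfl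
      rw [hevapp, hexp t]
      apply Submodule.le_topologicalClosure
      exact Submodule.subset_span ⟨t, v, hv, rfl⟩
    · have h0 : ev (NormedSpace.exp ((0:ℝ) • B)) = v := by
        rw [zero_smul, NormedSpace.exp_zero]
        rfl
      rw [h0]
      exact mem0 v hv
  -- main argument
  have hMtop : M = ⊤ := by
    rw [Submodule.eq_top_iff']
    intro x
    obtain ⟨y, hy⟩ := oneSub_surj r hrnorm x
    set z : X := y - κ y with hz
    have hκz : κ z = -z := by
      rw [hz, hκsub, hκinv, neg_sub]
    set w : X := hE.symm z with hw
    have hκw : κ w = -w := by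
      rw [hw, hκhE, hκz, map_neg]
    set x₁ : X := (2:ℝ)⁻¹ • (y + κ y) with hx1
    set x₂ : X := (-(Complex.I/2)) • w with hx2
    have hκ1 : κ x₁ = x₁ := by
      rw [hx1, hκreal, hκadd, hκinv, add_comm]
    have hκ2 : κ x₂ = x₂ := by
      rw [hx2, hκsmul, hκw, smul_neg, ← neg_smul]
      congr 1
      rw [map_neg, map_div₀, Complex.conj_I]
      rw [show ((starRingEnd ℂ) 2) = (2:ℂ) from map_ofNat _ 2, neg_div, neg_neg]
    have haw : a (hE.symm z) = z - μ • q (hE.symm z) := by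
      rw [ha, ContinuousLinearMap.sub_apply, ContinuousLinearMap.smul_apply, hEsymm]
    have h1 : Complex.I • a x₂ = (2:ℝ)⁻¹ • z - (μ/2 : ℝ) • q (hE.symm z) := by
      calc Complex.I • a x₂
          = Complex.I • ((-(Complex.I/2)) • a (hE.symm z)) := by rw [hx2, hw, map_smul]
        _ = (((2:ℝ)⁻¹ : ℂ)) • (z - μ • q (hE.symm z)) := by
            rw [smul_smul, haw]
            congr 1
            simp [Complex.ext_iff]
        _ = (2:ℝ)⁻¹ • z - (2:ℝ)⁻¹ • (μ • q (hE.symm z)) := by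
            rw [smul_sub, show (((2:ℝ):ℂ))⁻¹ = (↑((2:ℝ)⁻¹) : ℂ) by push_cast; ring,
              hrs, hrs]
        _ = (2:ℝ)⁻¹ • z - (μ/2 : ℝ) • q (hE.symm z) := by
            rw [smul_smul]
            congr 2
            ring
    have h3 : x₁ + (2:ℝ)⁻¹ • z = y := by
      rw [hx1, hz, ← smul_add]
      have h4 : y + κ y + (y - κ y) = (2:ℝ) • y := by
        rw [two_smul]; abel
      rw [h4, smul_smul]
      norm_num
    have hid : x₁ + Complex.I • a x₂ = x := by
      rw [h1, ← hy, hrapp, ← hz, ← h3]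
      abel
    rw [← hid]
    exact Submodule.add_mem _ (mem0 x₁ hκ1) (mem1 x₂ hκ2)
  rw [dense_iff_closure_eq, ← Submodule.topologicalClosure_coe, ← hMdef, hMtop]
  simp
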